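/- arXiv:1807.06842 — 2 statements merged into one kernel-verified Lean document; each statement's English description precedes it below -/
import Mathlib

section
/- The parity expectation is invariant under cyclic shifts of the word: for every n ≥ 3, every surjective word w : Fin n → Fin 3, and every k, P(w ∘ r_k) = P(w), where r_k : Fin n → Fin n is the cyclic shift i ↦ i + k (addition mod n). Hence P is an invariant of the oriented necklace (cyclic word) with beads colored by three colors. -/
/-- The set of proper subwords of a word `w : Fin n → Fin 3`: sections
`s : Fin 3 → Fin n` with `w (s i) = i` for all `i`. -/
def properSubwords {n : ℕ} (w : Fin n → Fin 3) : Finset (Fin 3 → Fin n) :=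
  Finset.univ.filter (fun s => ∀ i, w (s i) = i)

/-- The parity of a proper subword `s`: the sign of the unique permutation
`σ` of `Fin 3` such that `j ↦ s (σ j)` is (strictly) monotone; for injective
`s` this is the sorting permutation `Tuple.sort s`. -/
def subwordParity {n : ℕ} (s : Fin 3 → Fin n) : ℤ :=
  Equiv.Perm.sign (Tuple.sort s)

/-- The parity expectation `P(w)`: the sum of the parities of all proper
subwords of `w`, divided by the number of proper subwords of `w`. -/
def parityExpectation {n : ℕ} (w : Fin n → Fin 3) : ℚ :=
  (∑ s ∈ properSubwords w, (subwordParity s : ℚ)) / ((properSubwords w).card : ℚ)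

/-- Comparison sign of a pair. -/
def eps {n : ℕ} (a b : Fin n) : ℤ := if a < b then 1 else -1

lemma perm3_key : ∀ σ : Equiv.Perm (Fin 3),
    ((σ 0, σ 1, σ 2), Equiv.Perm.sign σ) = ((0,1,2),1) ∨
    ((σ 0, σ 1, σ 2), Equiv.Perm.sign σ) = ((0,2,1),-1) ∨
    ((σ 0, σ 1, σ 2), Equiv.Perm.sign σ) = ((1,0,2),-1) ∨
    ((σ 0, σ 1, σ 2), Equiv.Perm.sign σ) = ((1,2,0),1) ∨
    ((σ 0, σ 1, σ 2), Equiv.Perm.sign σ) = ((2,0,1),1) ∨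
    ((σ 0, σ 1, σ 2), Equiv.Perm.sign σ) = ((2,1,0),-1) := by decide

lemma parity_eq_eps {n : ℕ} (s : Fin 3 → Fin n) (hs : Function.Injective s) :
    subwordParity s = eps (s 0) (s 1) * eps (s 0) (s 2) * eps (s 1) (s 2) := by
  unfold subwordParity
  set σ := Tuple.sort s with hσ
  have hm : StrictMono (s ∘ σ) :=
    (Tuple.monotone_sort s).strictMono_of_injective (hs.comp σ.injective)
  have h01 := hm (show (0:Fin 3) < 1 by decide)
  have h12 := hm (show (1:Fin 3) < 2 by decide)
  have h02 := hm (show (0:Fin 3) < 2 by decide)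
  simp only [Function.comp_apply] at h01 h12 h02
  rcases perm3_key σ with h|h|h|h|h|h <;>
    simp only [Prod.mk.injEq] at h <;>
    obtain ⟨⟨h0, h1, h2⟩, hsg⟩ := h <;>
    rw [h0] at h01 h02 <;> rw [h1] at h01 h12 <;> rw [h2] at h12 h02 <;>
    rw [hsg] <;>
    simp only [eps, Fin.lt_def] at h01 h12 h02 ⊢ <;>
    split_ifs <;> (try rfl) <;> omega

lemma eps_add {n : ℕ} (k a b : Fin n) (hab : a ≠ b) :
    eps (a + k) (b + k) =
      (if (n ≤ a.val + k.val ↔ n ≤ b.val + k.val) then 1 else -1) * eps a b := by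
  have hab' : a.val ≠ b.val := fun h => hab (Fin.ext h)
  have ha := a.isLt
  have hb := b.isLt
  have hk := k.isLt
  simp only [eps, Fin.lt_def, Fin.add_def]
  have hma : (a.val + k.val) % n =
      if n ≤ a.val + k.val then a.val + k.val - n else a.val + k.val := by
    split_ifs with h
    · rw [Nat.mod_eq_sub_mod h, Nat.mod_eq_of_lt (by omega)]
    · exact Nat.mod_eq_of_lt (by omega)
  have hmb : (b.val + k.val) % n =
      if n ≤ b.val + k.val then b.val + k.val - n else b.val + k.val := by
    split_ifs with h
    · rw [Nat.mod_eq_sub_mod h, Nat.mod_eq_of_lt (by omega)]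
    · exact Nat.mod_eq_of_lt (by omega)
  rw [hma, hmb]
  by_cases hA : n ≤ a.val + k.val <;> by_cases hB : n ≤ b.val + k.val <;>
    simp only [hA, hB, iff_true, iff_false, iff_self, not_true, not_false_iff,
      if_true, if_false, true_iff, false_iff, if_pos, if_neg, not_false_eq_true] <;>
    split_ifs <;> (try norm_num) <;> omega

lemma eps_prod_add {n : ℕ} (k : Fin n) (s : Fin 3 → Fin n) (hs : Function.Injective s) :
    eps (s 0 + k) (s 1 + k) * eps (s 0 + k) (s 2 + k) * eps (s 1 + k) (s 2 + k) =
      eps (s 0) (s 1) * eps (s 0) (s 2) * eps (s 1) (s 2) := by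
  rw [eps_add k _ _ (hs.ne (by decide)), eps_add k _ _ (hs.ne (by decide)),
    eps_add k _ _ (hs.ne (by decide))]
  by_cases h0 : n ≤ (s 0).val + k.val <;> by_cases h1 : n ≤ (s 1).val + k.val <;>
    by_cases h2 : n ≤ (s 2).val + k.val <;>
    simp [h0, h1, h2]

lemma parity_shift {n : ℕ} (k : Fin n) (s : Fin 3 → Fin n) (hs : Function.Injective s) :
    subwordParity (fun i => s i + k) = subwordParity s := by
  have hs' : Function.Injective (fun i => s i + k) := fun i j h => by
    apply hs; exact add_right_cancel h
  rw [parity_eq_eps _ hs', parity_eq_eps _ hs]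
  exact eps_prod_add k s hs

lemma mem_properSubwords {n : ℕ} (w : Fin n → Fin 3) (s : Fin 3 → Fin n) :
    s ∈ properSubwords w ↔ ∀ i, w (s i) = i := by
  simp [properSubwords]

lemma inj_of_mem {n : ℕ} {w : Fin n → Fin 3} {s : Fin 3 → Fin n}
    (h : ∀ i, w (s i) = i) : Function.Injective s := by
  intro i j hij
  rw [← h i, ← h j, hij]

/-- The parity expectation is invariant under cyclic shifts of the word. -/
theorem parityExpectation_cyclic_shift (n : ℕ) (hn : 3 ≤ n)
    (w : Fin n → Fin 3) (hw : Function.Surjective w) (k : Fin n) :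
    parityExpectation (fun i => w (i + k)) = parityExpectation w := by
  haveI : NeZero n := ⟨by omega⟩
  unfold parityExpectation
  have hmem : ∀ s : Fin 3 → Fin n,
      s ∈ properSubwords (fun i => w (i + k)) ↔ (fun j => s j + k) ∈ properSubwords w := by
    intro s
    simp [mem_properSubwords]
  have hcard : (properSubwords (fun i => w (i + k))).card = (properSubwords w).card := by
    apply Finset.card_bij' (fun s _ => fun j => s j + k) (fun s _ => fun j => s j - k)
    · intro s hs
      exact (hmem s).1 hs
    · intro s hs
      rw [mem_properSubwords] at hs ⊢
      intro i
      have h' : s i - k + k = s i := by abel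
      rw [h']
      exact hs i
    · intro s _
      funext j
      show s j + k - k = s j
      abel
    · intro s _
      funext j
      show s j - k + k = s j
      abel
  have hsum : ∑ s ∈ properSubwords (fun i => w (i + k)), (subwordParity s : ℚ) =
      ∑ s ∈ properSubwords w, (subwordParity s : ℚ) := by
    apply Finset.sum_bij' (fun s _ => fun j => s j + k) (fun s _ => fun j => s j - k)
    · intro s hs
      exact (hmem s).1 hs
    · intro s hs
      rw [mem_properSubwords] at hs ⊢
      intro i
      have h' : s i - k + k = s i := by abel
      rw [h']
      exact hs i
    · intro s _
      funext j
      show s j + k - k = s j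
      abel
    · intro s _
      funext j
      show s j - k + k = s j
      abel
    · intro s hs
      rw [mem_properSubwords] at hs
      have hinj : Function.Injective s := inj_of_mem (w := fun i => w (i + k)) hs
      exact_mod_cast congrArg (fun z : ℤ => (z : ℚ)) (parity_shift k s hinj).symm
  rw [hsum, hcard]
end

section
/- Characterization of extremal parity expectation: for every n ≥ 3 and every surjective word w : Fin n → Fin 3, one has |P(w)| = 1 if and only if there exist k and a permutation τ of Fin 3 such that τ ∘ w ∘ r_k : Fin n → Fin 3 is monotone (i.e., w is a three-solid-blocks necklace up to cyclic shift and reordering of letters), where r_k : Fin n → Fin n is the cyclic shift i ↦ i + k (addition mod n). -/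
/- ---------------- Auxiliary lemmas ---------------- -/

lemma PW.sub_val' {n : ℕ} [NeZero n] (a b : Fin n) :
    ((a - b : Fin n) : ℕ) = if b.1 ≤ a.1 then a.1 - b.1 else a.1 + n - b.1 := by
  have hb : b.1 < n := b.2
  have ha : a.1 < n := a.2
  rw [Fin.sub_def]
  simp only
  split
  · next h =>
    have e : n - b.1 + a.1 = n + (a.1 - b.1) := by omega
    rw [e, Nat.add_mod_left, Nat.mod_eq_of_lt (by omega)]
  · next h =>
    rw [Nat.mod_eq_of_lt (by omega)]
    omega

/-- Orientation characterization. -/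
lemma PW.pos_iff {n : ℕ} [NeZero n] {a b c : Fin n}
    (hab : a ≠ b) (hac : a ≠ c) (hbc : b ≠ c) :
    ((b - a : Fin n) < c - a) ↔
      (a < b ∧ b < c) ∨ (b < c ∧ c < a) ∨ (c < a ∧ a < b) := by
  have h1 := PW.sub_val' b a
  have h2 := PW.sub_val' c a
  have hab' : a.1 ≠ b.1 := fun h => hab (Fin.ext h)
  have hac' : a.1 ≠ c.1 := fun h => hac (Fin.ext h)
  have hbc' : b.1 ≠ c.1 := fun h => hbc (Fin.ext h)
  have ha := a.2; have hb := b.2; have hc := c.2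
  simp only [Fin.lt_def, h1, h2]
  split_ifs <;> omega

lemma PW.fin3_lt_cases : ∀ u v : Fin 3, v < u →
    (v = 0 ∧ u = 1) ∨ (v = 0 ∧ u = 2) ∨ (v = 1 ∧ u = 2) := by decide

lemma PW.sort_eq_of_strictMono {N : ℕ} {f : Fin 3 → Fin N} (σ : Equiv.Perm (Fin 3))
    (h : StrictMono (f ∘ σ)) : Tuple.sort f = σ := by
  symm; rw [Tuple.eq_sort_iff]
  exact ⟨h.monotone, fun i j hij hf => absurd hf (h hij).ne⟩

lemma PW.sm3 {N : ℕ} {g : Fin 3 → Fin N} (h01 : g 0 < g 1) (h12 : g 1 < g 2) :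
    StrictMono g := by
  intro i j hij
  fin_cases i <;> fin_cases j <;>
    first
      | exact absurd hij (by decide)
      | exact h01
      | exact h12
      | exact h01.trans h12

/-- Parity of an injective section, in terms of cyclic orientation. -/
lemma PW.parity_eq {N : ℕ} [NeZero N] (s : Fin 3 → Fin N) (hinj : Function.Injective s) :
    subwordParity s = if (s 1 - s 0 : Fin N) < s 2 - s 0 then 1 else -1 := by
  have h01 : s 0 ≠ s 1 := fun h => absurd (hinj h) (by decide)
  have h02 : s 0 ≠ s 2 := fun h => absurd (hinj h) (by decide)
  have h12 : s 1 ≠ s 2 := fun h => absurd (hinj h) (by decide)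
  by_cases hpos : (s 1 - s 0 : Fin N) < s 2 - s 0
  · rw [if_pos hpos]
    rw [PW.pos_iff h01 h02 h12] at hpos
    unfold subwordParity
    rcases hpos with ⟨ha, hb⟩ | ⟨ha, hb⟩ | ⟨ha, hb⟩
    · rw [PW.sort_eq_of_strictMono (Equiv.refl _) ?_]
      · simp
      · refine PW.sm3 ?_ ?_ <;> simpa using ‹_›
    · -- s 1 < s 2 < s 0 : σ = (0 1)(1 2) sending 0↦1,1↦2,2↦0
      rw [PW.sort_eq_of_strictMono
        ((Equiv.swap (0:Fin 3) 1 * Equiv.swap 1 2 : Equiv.Perm (Fin 3))) ?_]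
      · decide
      · refine PW.sm3 ?_ ?_
        · show s (_ : Fin 3) < s _
          rw [(by decide : ((Equiv.swap (0:Fin 3) 1 * Equiv.swap 1 2 : Equiv.Perm (Fin 3))) 0 = 1),
            (by decide : ((Equiv.swap (0:Fin 3) 1 * Equiv.swap 1 2 : Equiv.Perm (Fin 3))) 1 = 2)]
          exact ha
        · show s (_ : Fin 3) < s _
          rw [(by decide : ((Equiv.swap (0:Fin 3) 1 * Equiv.swap 1 2 : Equiv.Perm (Fin 3))) 1 = 2),
            (by decide : ((Equiv.swap (0:Fin 3) 1 * Equiv.swap 1 2 : Equiv.Perm (Fin 3))) 2 = 0)]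
          exact hb
    · -- s 2 < s 0 < s 1 : σ = (1 2)(0 1) sending 0↦2,1↦0,2↦1
      rw [PW.sort_eq_of_strictMono
        ((Equiv.swap (1:Fin 3) 2 * Equiv.swap 0 1 : Equiv.Perm (Fin 3))) ?_]
      · decide
      · refine PW.sm3 ?_ ?_
        · show s (_ : Fin 3) < s _
          rw [(by decide : ((Equiv.swap (1:Fin 3) 2 * Equiv.swap 0 1 : Equiv.Perm (Fin 3))) 0 = 2),
            (by decide : ((Equiv.swap (1:Fin 3) 2 * Equiv.swap 0 1 : Equiv.Perm (Fin 3))) 1 = 0)]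
          exact ha
        · show s (_ : Fin 3) < s _
          rw [(by decide : ((Equiv.swap (1:Fin 3) 2 * Equiv.swap 0 1 : Equiv.Perm (Fin 3))) 1 = 0),
            (by decide : ((Equiv.swap (1:Fin 3) 2 * Equiv.swap 0 1 : Equiv.Perm (Fin 3))) 2 = 1)]
          exact hb
  · rw [if_neg hpos]
    have hne : (s 2 - s 0 : Fin N) ≠ s 1 - s 0 := by
      intro h
      exact h12 (sub_left_injective h).symm
    have hneg : (s 2 - s 0 : Fin N) < s 1 - s 0 := (not_lt.1 hpos).lt_of_ne hne
    rw [PW.pos_iff h02 h01 (Ne.symm h12)] at hneg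
    unfold subwordParity
    rcases hneg with ⟨ha, hb⟩ | ⟨ha, hb⟩ | ⟨ha, hb⟩
    · -- s 0 < s 2 < s 1 : σ = swap 1 2
      rw [PW.sort_eq_of_strictMono (Equiv.swap (1:Fin 3) 2) ?_]
      · decide
      · refine PW.sm3 ?_ ?_
        · show s (_ : Fin 3) < s _
          rw [(by decide : (Equiv.swap (1:Fin 3) 2) 0 = 0),
            (by decide : (Equiv.swap (1:Fin 3) 2) 1 = 2)]
          exact ha
        · show s (_ : Fin 3) < s _
          rw [(by decide : (Equiv.swap (1:Fin 3) 2) 1 = 2),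
            (by decide : (Equiv.swap (1:Fin 3) 2) 2 = 1)]
          exact hb
    · -- s 2 < s 1 < s 0 : σ = swap 0 2
      rw [PW.sort_eq_of_strictMono (Equiv.swap (0:Fin 3) 2) ?_]
      · decide
      · refine PW.sm3 ?_ ?_
        · show s (_ : Fin 3) < s _
          rw [(by decide : (Equiv.swap (0:Fin 3) 2) 0 = 2),
            (by decide : (Equiv.swap (0:Fin 3) 2) 1 = 1)]
          exact ha
        · show s (_ : Fin 3) < s _
          rw [(by decide : (Equiv.swap (0:Fin 3) 2) 1 = 1),
            (by decide : (Equiv.swap (0:Fin 3) 2) 2 = 0)]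
          exact hb
    · -- s 1 < s 0 < s 2 : σ = swap 0 1
      rw [PW.sort_eq_of_strictMono (Equiv.swap (0:Fin 3) 1) ?_]
      · decide
      · refine PW.sm3 ?_ ?_
        · show s (_ : Fin 3) < s _
          rw [(by decide : (Equiv.swap (0:Fin 3) 1) 0 = 1),
            (by decide : (Equiv.swap (0:Fin 3) 1) 1 = 0)]
          exact ha
        · show s (_ : Fin 3) < s _
          rw [(by decide : (Equiv.swap (0:Fin 3) 1) 1 = 0),
            (by decide : (Equiv.swap (0:Fin 3) 1) 2 = 2)]
          exact hb

lemma PW.abs_sum_eq_card_iff {α : Type*} (S : Finset α) (f : α → ℤ)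
    (hf : ∀ x ∈ S, f x = 1 ∨ f x = -1) :
    |∑ x ∈ S, f x| = S.card ↔ (∀ x ∈ S, f x = 1) ∨ (∀ x ∈ S, f x = -1) := by
  classical
  have hsplit := Finset.sum_filter_add_sum_filter_not S (fun x => f x = 1) f
  set P := S.filter (fun x => f x = 1) with hP
  set Q := S.filter (fun x => ¬ f x = 1) with hQ
  have hPsum : ∑ x ∈ P, f x = P.card := by
    rw [Finset.sum_congr rfl (fun x hx => (Finset.mem_filter.1 hx).2)]
    simp [hP]
  have hQsum : ∑ x ∈ Q, f x = -Q.card := by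
    have hval : ∀ x ∈ Q, f x = -1 := by
      intro x hx
      rcases hf x (Finset.mem_filter.1 hx).1 with h | h
      · exact absurd h (Finset.mem_filter.1 hx).2
      · exact h
    rw [Finset.sum_congr rfl hval]
    simp
  have hcard : P.card + Q.card = S.card := Finset.card_filter_add_card_filter_not _
  have hPiff : (∀ x ∈ S, f x = 1) ↔ Q.card = 0 := by
    rw [Finset.card_eq_zero, Finset.filter_eq_empty_iff]
    constructor
    · intro h x hx; exact not_not_intro (h x hx)
    · intro h x hx; by_contra hc; exact h hx hc
  have hQiff : (∀ x ∈ S, f x = -1) ↔ P.card = 0 := by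
    rw [Finset.card_eq_zero, Finset.filter_eq_empty_iff]
    constructor
    · intro h x hx hfx; rw [h x hx] at hfx; norm_num at hfx
    · intro h x hx; rcases hf x hx with h1 | h1
      · exact absurd h1 (h hx)
      · exact h1
  rw [← hsplit, hPsum, hQsum, hPiff, hQiff,
    abs_eq (by positivity : (0:ℤ) ≤ (S.card : ℤ))]
  omega

/-- The combinatorial core: if all triples are positively oriented, the word is
a rotation of a monotone word. -/
lemma PW.core {n : ℕ} [NeZero n] (w : Fin n → Fin 3)
    (hw : Function.Surjective w)
    (H : ∀ a b c, w a = 0 → w b = 1 → w c = 2 → (b - a : Fin n) < c - a) :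
    ∃ k, Monotone fun i => w (i + k) := by
  classical
  obtain ⟨a₀, ha₀⟩ := hw 0
  obtain ⟨b₀, hb₀⟩ := hw 1
  obtain ⟨c₀, hc₀⟩ := hw 2
  set g : Fin n → ℕ := fun x => ((x - a₀ : Fin n) : ℕ) with hg
  have hglt : ∀ x, g x < n := fun x => (x - a₀).2
  have hginj : ∀ x y, g x = g y → x = y := by
    intro x y h
    have h2 : (x - a₀ : Fin n) = y - a₀ := Fin.ext h
    have h3 := congrArg (· + a₀) h2
    simpa using h3
  have hBC : ∀ b c, w b = 1 → w c = 2 → g b < g c := by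
    intro b c hb hc
    exact H a₀ b c ha₀ hb hc
  have hsub : ∀ x y : Fin n,
      ((x - y : Fin n) : ℕ) = if g y ≤ g x then g x - g y else g x + n - g y := by
    intro x y
    have e : x - y = (x - a₀) - (y - a₀) := by abel
    rw [e, PW.sub_val']
  have hgne : ∀ x y, w x ≠ w y → g x ≠ g y := by
    intro x y hxy h
    exact hxy (by rw [hginj x y h])
  have hsplit : ∀ a, w a = 0 → (∀ b, w b = 1 → g a < g b) ∨ (∀ c, w c = 2 → g c < g a) := by
    intro a ha
    by_contra hcon
    push_neg at hcon
    obtain ⟨⟨b, hb, hba⟩, ⟨c, hc, hac⟩⟩ := hcon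
    have hba' : g b ≠ g a := hgne b a (by rw [hb, ha]; decide)
    have hca' : g c ≠ g a := hgne c a (by rw [hc, ha]; decide)
    have hH := H a b c ha hb hc
    rw [Fin.lt_def, hsub b a, hsub c a] at hH
    have h1 := hglt b; have h2 := hglt c; have h3 := hglt a
    split_ifs at hH <;> omega
  by_cases hA2 : ∃ a, w a = 0 ∧ ∀ c, w c = 2 → g c < g a
  · -- the wrap-around case
    set s : Finset (Fin n) :=
      Finset.univ.filter (fun a => w a = 0 ∧ ∀ c, w c = 2 → g c < g a) with hs
    have hsne : s.Nonempty := by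
      obtain ⟨a, h⟩ := hA2
      exact ⟨a, Finset.mem_filter.2 ⟨Finset.mem_univ _, h⟩⟩
    obtain ⟨a₂, ha₂s, hmin⟩ := Finset.exists_min_image s g hsne
    have ha₂ : w a₂ = 0 ∧ ∀ c, w c = 2 → g c < g a₂ := by
      simpa [hs] using ha₂s
    have htlt : g a₂ < n := hglt a₂
    have hB_lt : ∀ x, w x = 1 → g x < g a₂ :=
      fun x hx => (hBC x c₀ hx hc₀).trans (ha₂.2 c₀ hc₀)
    have hC_lt : ∀ x, w x = 2 → g x < g a₂ := fun x hx => ha₂.2 x hx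
    have hA_cases : ∀ x, w x = 0 →
        ((∀ b, w b = 1 → g x < g b) ∧ g x < g a₂) ∨ g a₂ ≤ g x := by
      intro x hx
      rcases hsplit x hx with h | h
      · left
        exact ⟨h, (h b₀ hb₀).trans (hB_lt b₀ hb₀)⟩
      · right
        exact hmin x (Finset.mem_filter.2 ⟨Finset.mem_univ _, hx, h⟩)
    refine ⟨a₂, ?_⟩
    intro i j hij
    show w (i + a₂) ≤ w (j + a₂)
    by_contra hc
    rw [not_le] at hc
    have hij' : i.1 ≤ j.1 := hij
    have e1 : ((i + a₂ - a₂ : Fin n) : ℕ) = i.1 := by rw [add_sub_cancel_right]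
    have e2 : ((j + a₂ - a₂ : Fin n) : ℕ) = j.1 := by rw [add_sub_cancel_right]
    have f1 := hsub (i + a₂) a₂
    have f2 := hsub (j + a₂) a₂
    rw [e1] at f1
    rw [e2] at f2
    have hgi := hglt (i + a₂)
    have hgj := hglt (j + a₂)
    rcases PW.fin3_lt_cases _ _ hc with ⟨hv, hu⟩ | ⟨hv, hu⟩ | ⟨hv, hu⟩
    · -- w (j+a₂) = 0, w (i+a₂) = 1
      have hx1 : g (i + a₂) < g a₂ := hB_lt _ hu
      rcases hA_cases _ hv with ⟨h, hyt⟩ | hyt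
      · have : g (j + a₂) < g (i + a₂) := h _ hu
        split_ifs at f1 f2 <;> omega
      · split_ifs at f1 f2 <;> omega
    · -- w (j+a₂) = 0, w (i+a₂) = 2
      have hx1 : g (i + a₂) < g a₂ := hC_lt _ hu
      rcases hA_cases _ hv with ⟨h, hyt⟩ | hyt
      · have : g (j + a₂) < g (i + a₂) := (h b₀ hb₀).trans (hBC b₀ _ hb₀ hu)
        split_ifs at f1 f2 <;> omega
      · split_ifs at f1 f2 <;> omega
    · -- w (j+a₂) = 1, w (i+a₂) = 2
      have hx1 : g (i + a₂) < g a₂ := hC_lt _ hu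
      have hy1 : g (j + a₂) < g a₂ := hB_lt _ hv
      have : g (j + a₂) < g (i + a₂) := hBC _ _ hv hu
      split_ifs at f1 f2 <;> omega
  · -- no wrap-around: cut at a₀
    push_neg at hA2
    have hA1 : ∀ a, w a = 0 → ∀ b, w b = 1 → g a < g b := by
      intro a ha
      rcases hsplit a ha with h | h
      · exact h
      · obtain ⟨c, hc, hgc⟩ := hA2 a ha
        exact absurd (h c hc) (not_lt.2 hgc)
    refine ⟨a₀, ?_⟩
    intro i j hij
    show w (i + a₀) ≤ w (j + a₀)
    by_contra hc
    rw [not_le] at hc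
    have hij' : i.1 ≤ j.1 := hij
    have e1 : g (i + a₀) = i.1 := by
      show ((i + a₀ - a₀ : Fin n) : ℕ) = i.1
      rw [add_sub_cancel_right]
    have e2 : g (j + a₀) = j.1 := by
      show ((j + a₀ - a₀ : Fin n) : ℕ) = j.1
      rw [add_sub_cancel_right]
    rcases PW.fin3_lt_cases _ _ hc with ⟨hv, hu⟩ | ⟨hv, hu⟩ | ⟨hv, hu⟩
    · have : g (j + a₀) < g (i + a₀) := hA1 _ hv _ hu
      omega
    · have : g (j + a₀) < g (i + a₀) := (hA1 _ hv b₀ hb₀).trans (hBC b₀ _ hb₀ hu)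
      omega
    · have : g (j + a₀) < g (i + a₀) := hBC _ _ hv hu
      omega

/-- Characterization of extremal parity expectation: `|P(w)| = 1` iff `w` is a
three-solid-blocks necklace up to cyclic shift and reordering of letters. -/
theorem abs_parityExpectation_eq_one_iff (n : ℕ) (hn : 3 ≤ n)
    (w : Fin n → Fin 3) (hw : Function.Surjective w) :
    |parityExpectation w| = 1 ↔
      ∃ (k : Fin n) (τ : Equiv.Perm (Fin 3)),
        Monotone (fun i => τ (w (i + k))) := by
  classical
  haveI : NeZero n := ⟨by omega⟩
  obtain ⟨a₀, ha₀⟩ := hw 0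
  obtain ⟨b₀, hb₀⟩ := hw 1
  obtain ⟨c₀, hc₀⟩ := hw 2
  have hmem : ∀ s : Fin 3 → Fin n, s ∈ properSubwords w ↔ ∀ i, w (s i) = i := by
    intro s; simp [properSubwords]
  have hinj : ∀ s ∈ properSubwords w, Function.Injective s := by
    intro s hs x y hxy
    rw [hmem] at hs
    rw [← hs x, ← hs y, hxy]
  have htmem : ∀ a b c : Fin n, w a = 0 → w b = 1 → w c = 2 →
      ![a, b, c] ∈ properSubwords w := by
    intro a b c ha hb hc
    rw [hmem]
    intro i
    fin_cases i <;> simpa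
  have hne : (properSubwords w).Nonempty := ⟨![a₀, b₀, c₀], htmem _ _ _ ha₀ hb₀ hc₀⟩
  -- Step A : |P w| = 1 ↔ |∑ ∈ ℤ| = card
  have hcardQ : ((properSubwords w).card : ℚ) ≠ 0 := by
    exact_mod_cast hne.card_pos.ne'
  have hPE : parityExpectation w
      = ((∑ s ∈ properSubwords w, subwordParity s : ℤ) : ℚ)
        / ((properSubwords w).card : ℚ) := by
    rw [parityExpectation]
    push_cast
    ring
  have stepA : |parityExpectation w| = 1 ↔
      |∑ s ∈ properSubwords w, subwordParity s| = ((properSubwords w).card : ℤ) := by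
    rw [hPE, abs_div, abs_of_nonneg (by positivity : (0:ℚ) ≤ ((properSubwords w).card : ℚ)),
      div_eq_one_iff_eq hcardQ, ← Int.cast_abs]
    exact_mod_cast Iff.rfl
  have hpm : ∀ s ∈ properSubwords w, subwordParity s = 1 ∨ subwordParity s = -1 := by
    intro s _
    rcases Int.units_eq_one_or (Equiv.Perm.sign (Tuple.sort s)) with h | h <;>
      simp [subwordParity, h]
  have stepB : |∑ s ∈ properSubwords w, subwordParity s| = ((properSubwords w).card : ℤ) ↔
      (∀ s ∈ properSubwords w, subwordParity s = 1) ∨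
      (∀ s ∈ properSubwords w, subwordParity s = -1) :=
    PW.abs_sum_eq_card_iff _ _ hpm
  have hpar : ∀ s ∈ properSubwords w,
      subwordParity s = if (s 1 - s 0 : Fin n) < s 2 - s 0 then 1 else -1 :=
    fun s hs => PW.parity_eq s (hinj s hs)
  -- Step C : relate to triples
  have key1 : (∀ s ∈ properSubwords w, subwordParity s = 1) ↔
      (∀ a b c : Fin n, w a = 0 → w b = 1 → w c = 2 → (b - a : Fin n) < c - a) := by
    constructor
    · intro h a b c ha hb hc
      have hm := htmem a b c ha hb hc
      have := h _ hm
      rw [hpar _ hm] at this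
      simp only [Matrix.cons_val_one, Matrix.head_cons, Matrix.cons_val_zero] at this
      rw [show (![a, b, c] : Fin 3 → Fin n) 2 = c by simp] at this
      by_contra h'
      simp [h'] at this
    · intro h s hs
      rw [hpar s hs, if_pos]
      rw [hmem] at hs
      exact h _ _ _ (hs 0) (hs 1) (hs 2)
  have key2 : (∀ s ∈ properSubwords w, subwordParity s = -1) ↔
      (∀ a b c : Fin n, w a = 0 → w b = 1 → w c = 2 → ¬ ((b - a : Fin n) < c - a)) := by
    constructor
    · intro h a b c ha hb hc
      have hm := htmem a b c ha hb hc
      have := h _ hm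
      rw [hpar _ hm] at this
      simp only [Matrix.cons_val_one, Matrix.head_cons, Matrix.cons_val_zero] at this
      rw [show (![a, b, c] : Fin 3 → Fin n) 2 = c by simp] at this
      intro h'
      simp [h'] at this
    · intro h s hs
      rw [hpar s hs, if_neg]
      rw [hmem] at hs
      exact h _ _ _ (hs 0) (hs 1) (hs 2)
  rw [stepA, stepB, key1, key2]
  constructor
  · rintro (hpos | hneg)
    · obtain ⟨k, hk⟩ := PW.core w hw hpos
      exact ⟨k, 1, by simpa using hk⟩
    · set w' : Fin n → Fin 3 := fun x => Equiv.swap (1:Fin 3) 2 (w x) with hw'def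
      have hw' : Function.Surjective w' := (Equiv.swap (1:Fin 3) 2).surjective.comp hw
      have H' : ∀ a b c, w' a = 0 → w' b = 1 → w' c = 2 → (b - a : Fin n) < c - a := by
        intro a b c ha hb hc
        have ha' : w a = 0 := (Equiv.swap (1:Fin 3) 2).injective (by rw [show (Equiv.swap (1:Fin 3) 2) (w a) = 0 from ha]; decide)
        have hb' : w b = 2 := (Equiv.swap (1:Fin 3) 2).injective (by rw [show (Equiv.swap (1:Fin 3) 2) (w b) = 1 from hb]; decide)
        have hc' : w c = 1 := (Equiv.swap (1:Fin 3) 2).injective (by rw [show (Equiv.swap (1:Fin 3) 2) (w c) = 2 from hc]; decide)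
        have h1 := hneg a c b ha' hc' hb'
        have hne : (b - a : Fin n) ≠ c - a := by
          intro h
          have : b = c := sub_left_injective h
          rw [this, hc'] at hb'
          exact absurd hb' (by decide)
        exact (not_lt.1 h1).lt_of_ne hne
      obtain ⟨k, hk⟩ := PW.core w' hw' H'
      exact ⟨k, Equiv.swap 1 2, hk⟩
  · rintro ⟨k, τ, hmono⟩
    have hkey : ∀ x y : Fin n, τ (w (x + k)) ≠ τ (w (y + k)) →
        (x < y ↔ τ (w (x + k)) < τ (w (y + k))) := by
      intro x y hne
      constructor
      · intro h
        exact (hmono h.le).lt_of_ne hne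
      · intro h
        by_contra hcon
        exact absurd (hmono (not_lt.1 hcon)) h.not_ge
    have τ01 : τ 0 ≠ τ 1 := fun h => absurd (τ.injective h) (by decide)
    have τ02 : τ 0 ≠ τ 2 := fun h => absurd (τ.injective h) (by decide)
    have τ12 : τ 1 ≠ τ 2 := fun h => absurd (τ.injective h) (by decide)
    have main : ∀ a b c : Fin n, w a = 0 → w b = 1 → w c = 2 →
        (((b - a : Fin n) < c - a) ↔ ((τ 1 - τ 0 : Fin 3) < τ 2 - τ 0)) := by
      intro a b c ha hb hc
      have ea : (a - k) + k = a := by abel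
      have eb : (b - k) + k = b := by abel
      have ec : (c - k) + k = c := by abel
      have fa : τ (w ((a - k) + k)) = τ 0 := by rw [ea, ha]
      have fb : τ (w ((b - k) + k)) = τ 1 := by rw [eb, hb]
      have fc : τ (w ((c - k) + k)) = τ 2 := by rw [ec, hc]
      have oab : (a - k : Fin n) < b - k ↔ τ 0 < τ 1 := by
        rw [hkey (a - k) (b - k) (by rw [fa, fb]; exact τ01), fa, fb]
      have obc : (b - k : Fin n) < c - k ↔ τ 1 < τ 2 := by
        rw [hkey (b - k) (c - k) (by rw [fb, fc]; exact τ12), fb, fc]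
      have oca : (c - k : Fin n) < a - k ↔ τ 2 < τ 0 := by
        rw [hkey (c - k) (a - k) (by rw [fc, fa]; exact τ02.symm), fc, fa]
      have dab : (a - k : Fin n) ≠ b - k := by
        intro h
        have : a = b := sub_left_injective h
        rw [this, hb] at ha
        exact absurd ha (by decide)
      have dac : (a - k : Fin n) ≠ c - k := by
        intro h
        have : a = c := sub_left_injective h
        rw [this, hc] at ha
        exact absurd ha (by decide)
      have dbc : (b - k : Fin n) ≠ c - k := by
        intro h
        have : b = c := sub_left_injective h
        rw [this, hc] at hb
        exact absurd hb (by decide)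
      have e1 : (b - a : Fin n) = (b - k) - (a - k) := by abel
      have e2 : (c - a : Fin n) = (c - k) - (a - k) := by abel
      rw [e1, e2, PW.pos_iff dab dac dbc, PW.pos_iff τ01 τ02 τ12, oab, obc, oca]
    by_cases hτ : (τ 1 - τ 0 : Fin 3) < τ 2 - τ 0
    · left
      intro a b c ha hb hc
      exact (main a b c ha hb hc).2 hτ
    · right
      intro a b c ha hb hc hcon
      exact hτ ((main a b c ha hb hc).1 hcon)
end
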